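/- Let Σ = (ℕ, W, B) be an l-complete dynamical system. Define the state space X as the union of all B|[0,r-1] for r ∈ [0,l-1] (strings of length < l, including the empty string) together with all B|[t,t+l-1] for t ∈ ℕ (strings of length l), and define B_S as the set of pairs (w,x) with w ∈ B and x(t) = w|[0,t-1] for t < l and x(t) = w|[t-l,t-1] for t ≥ l. Then Σ_S = (ℕ, W, X, B_S) satisfies the synchronous state property: for all (w₁,x₁),(w₂,x₂) ∈ B_S and t ∈ ℕ with x₁(t) = x₂(t), the concatenation at time t of (w₁,x₁) and (w₂,x₂) belongs to B_S; moreover the projection of B_S to the W-component equals B. -/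

import Mathlib

def res {W : Type*} (w : ℕ → W) (t l : ℕ) : Fin (l + 1) → W := fun i => w (t + i)

def resSet {W : Type*} (B : Set (ℕ → W)) (t l : ℕ) : Set (Fin (l + 1) → W) :=
  {s | ∃ v ∈ B, s = res v t l}

def lComplete {W : Type*} (B : Set (ℕ → W)) (l : ℕ) : Prop :=
  ∀ w : ℕ → W, w ∈ B ↔ ∀ t : ℕ, res w t l ∈ resSet B t l

/-- The state at time `t`: the last `min t l` symbols of `w` before time `t`, as a string. -/
def stateOf {W : Type*} (w : ℕ → W) (l t : ℕ) : List W :=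
  if t < l then List.ofFn (fun i : Fin t => w i)
  else List.ofFn (fun i : Fin l => w (t - l + i))

/-- The full behavior of the canonical state space representation. -/
def stateBeh {W : Type*} (B : Set (ℕ → W)) (l : ℕ) : Set (ℕ → W × List W) :=
  {v | (fun t => (v t).1) ∈ B ∧ ∀ t : ℕ, (v t).2 = stateOf (fun s => (v s).1) l t}

lemma ofFn_apply_eq {W : Type*} {n : ℕ} {f g : Fin n → W}
    (h : List.ofFn f = List.ofFn g) (i : Fin n) : f i = g i := by
  have := List.ofFn_injective h
  exact congrFun this i

lemma stateOf_agree {W : Type*} {w₁ w₂ : ℕ → W} {l t : ℕ}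
    (h : stateOf w₁ l t = stateOf w₂ l t) :
    ∀ j, j < t → t ≤ j + l → w₁ j = w₂ j := by
  intro j hj hjl
  unfold stateOf at h
  by_cases ht : t < l
  · rw [if_pos ht, if_pos ht] at h
    exact ofFn_apply_eq h ⟨j, hj⟩
  · rw [if_neg ht, if_neg ht] at h
    push_neg at ht
    have hjge : t - l ≤ j := by omega
    have : j - (t - l) < l := by omega
    have := ofFn_apply_eq h ⟨j - (t - l), this⟩
    simpa [Nat.add_sub_cancel' hjge, show t - l + (j - (t - l)) = j by omega] using this

lemma stateOf_congr {W : Type*} {w₁ w₂ : ℕ → W} {l t : ℕ}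
    (h : ∀ j, j < t → t ≤ j + l → w₁ j = w₂ j) :
    stateOf w₁ l t = stateOf w₂ l t := by
  unfold stateOf
  by_cases ht : t < l
  · rw [if_pos ht, if_pos ht]
    congr 1
    funext i
    exact h i i.isLt (by omega)
  · rw [if_neg ht, if_neg ht]
    push_neg at ht
    congr 1
    funext i
    exact h (t - l + i) (by omega) (by omega)

theorem stmt_9 {W : Type*} (B : Set (ℕ → W)) (l : ℕ)
    (hlc : lComplete B l) :
    (∀ v₁ ∈ stateBeh B l, ∀ v₂ ∈ stateBeh B l, ∀ t : ℕ,
        (v₁ t).2 = (v₂ t).2 →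
        (fun s => if s < t then v₁ s else v₂ s) ∈ stateBeh B l) ∧
    {w | ∃ v ∈ stateBeh B l, w = fun t => (v t).1} = B := by
  constructor
  · rintro v₁ ⟨hb₁, hs₁⟩ v₂ ⟨hb₂, hs₂⟩ t hst
    set w₁ : ℕ → W := fun s => (v₁ s).1 with hw₁
    set w₂ : ℕ → W := fun s => (v₂ s).1 with hw₂
    have hag : ∀ j, j < t → t ≤ j + l → w₁ j = w₂ j := by
      apply stateOf_agree
      rw [← hs₁ t, ← hs₂ t, hst]
    have hfst : (fun u => ((fun s => if s < t then v₁ s else v₂ s) u).1)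
        = fun u => if u < t then w₁ u else w₂ u := by
      funext u
      by_cases h : u < t <;> simp [h] <;> rfl
    constructor
    · show (fun u => ((fun s => if s < t then v₁ s else v₂ s) u).1) ∈ B
      rw [hfst, hlc]
      intro s
      by_cases h : s + l < t
      · refine ⟨w₁, hb₁, funext fun i => ?_⟩
        have : s + (i : ℕ) < t := by omega
        simp [res, this]
      · refine ⟨w₂, hb₂, funext fun i => ?_⟩
        by_cases h2 : s + (i : ℕ) < t
        · simp only [res, if_pos h2]
          exact hag (s + i) h2 (by omega)
        · simp [res, h2]
    · intro u
      by_cases h : u < t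
      · simp only [if_pos h]
        rw [hs₁ u, hfst]
        apply stateOf_congr
        intro j hj _
        have : j < t := by omega
        simp [this]
      · simp only [if_neg h]
        rw [hs₂ u, hfst]
        apply stateOf_congr
        intro j hj hjl
        by_cases h2 : j < t
        · simp only [if_pos h2]
          exact (hag j h2 (by omega)).symm
        · simp [h2]
  · ext w
    constructor
    · rintro ⟨v, ⟨hb, _⟩, rfl⟩
      exact hb
    · intro hw
      refine ⟨fun t => (w t, stateOf w l t), ⟨hw, fun t => rfl⟩, rfl⟩
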